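/- Let L ≥ 3, N ≥ 2, σ_w, σ_b > 0 with 0 < σ_w² < 2, and set r* = √(N σ_b²/(2 − σ_w²)). Define the ring energy ℒ on ((0,∞) × (0,∞) × (0,N))^L by ℒ({r₊_l, r₋_l, k_l}) = (1/2) Σ_{l=0}^{L-1} [ (r₊_l² + r₋_l²)/(σ_w² r₊_{l-1}²/N + σ_b²) + N log(σ_w² r₊_l²/N + σ_b²) + (N − k_l)(3 log(N − k_l) − 2 log r₊_l) + k_l (3 log k_l − 2 log r₋_l) ], indices modulo L. Then the uniform configuration r₊_l = r₋_l = r*, k_l = N/2 for all l is a strict local minimum of ℒ. -/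

import Mathlib

set_option maxHeartbeats 1000000

lemma aux_cross (n w κ : ℝ) (hn : 0 < n) :
    (1/40)*n*w^2 + (1/10)*(κ^2/n) ≤ (4/17)*n*w^2 + (27/5)*(κ^2/n) - 2*κ*w := by
  have key : 0 ≤ ((4/17 - 1/40)*(n*w)^2 + (27/5 - 1/10)*κ^2 - 2*(n*w)*κ) := by
    nlinarith [sq_nonneg (5*κ - n*w), sq_nonneg (κ - n*w)]
  have e : (4/17)*n*w^2 + (27/5)*(κ^2/n) - 2*κ*w - ((1/40)*n*w^2 + (1/10)*(κ^2/n))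
      = ((4/17 - 1/40)*(n*w)^2 + (27/5 - 1/10)*κ^2 - 2*(n*w)*κ)/n := by
    field_simp; ring
  have := div_nonneg key hn.le
  linarith [e ▸ this]

lemma aux_cosh {w : ℝ} (hw : |w| ≤ 1/2) : (4/17)*w^2 ≤ Real.log (Real.cosh w) := by
  have ha := abs_nonneg w
  have h1 : 1 + |w| + |w|^2/2 ≤ Real.exp |w| := Real.quadratic_le_exp_of_nonneg ha
  have h2 : (-|w|) + 1 ≤ Real.exp (-|w|) := Real.add_one_le_exp _
  have h3 : Real.cosh |w| = (Real.exp |w| + Real.exp (-|w|))/2 := Real.cosh_eq |w|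
  have h4 : Real.cosh |w| = Real.cosh w := Real.cosh_abs w
  have h0 : 1 + w^2/4 ≤ Real.cosh w := by nlinarith [sq_abs w]
  have hc : (0:ℝ) < 1 + w^2/4 := by nlinarith [sq_nonneg w]
  have h5 : Real.log (1 + w^2/4) ≤ Real.log (Real.cosh w) := Real.log_le_log hc h0
  have h6 : 1 - (1 + w^2/4)⁻¹ ≤ Real.log (1+w^2/4) := Real.one_sub_inv_le_log_of_pos hc
  have hw2 : w^2 ≤ 1/4 := by nlinarith [sq_abs w]
  have h8 : (1+w^2/4)⁻¹ ≤ 1 - (4/17)*w^2 := by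
    rw [inv_eq_one_div, div_le_iff₀ hc]; nlinarith [sq_nonneg w, sq_nonneg (w^2)]
  linarith

lemma aux_phi {τ : ℝ} (h0 : 0 ≤ τ) (h1 : τ ≤ 1/20) :
    (9/10)*τ^2 ≤ (1+τ)*Real.log (1+τ) + (1-τ)*Real.log (1-τ) := by
  have hp : (0:ℝ) < 1 + τ := by linarith
  have hq : (0:ℝ) < 1 - τ := by linarith
  have hA : 1 - (1+τ)⁻¹ ≤ Real.log (1+τ) := Real.one_sub_inv_le_log_of_pos hp
  have hB : Real.log (1-τ) ≤ (1-τ) - 1 := Real.log_le_sub_one_of_pos hq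
  have hAB : 1 - ((1+τ)*(1-τ))⁻¹ ≤ Real.log (1+τ) + Real.log (1-τ) := by
    have := Real.one_sub_inv_le_log_of_pos (mul_pos hp hq)
    rwa [Real.log_mul hp.ne' hq.ne'] at this
  have e2 : (1+τ)⁻¹ ≤ 1 - (20/21)*τ := by
    rw [inv_eq_one_div, div_le_iff₀ hp]; nlinarith
  have e1 : ((1+τ)*(1-τ))⁻¹ ≤ 1 + (400/399)*τ^2 := by
    have hτ2 : τ^2 ≤ 1/400 := by nlinarith
    rw [inv_eq_one_div, div_le_iff₀ (mul_pos hp hq)]; nlinarith [hτ2, sq_nonneg τ, sq_nonneg (τ^2)]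
  have hA' : (20/21)*τ ≤ Real.log (1+τ) := by linarith
  have hAB' : -((400/399)*τ^2) ≤ Real.log (1+τ) + Real.log (1-τ) := by linarith
  have hB' : Real.log (1-τ) ≤ -τ := by linarith
  have f1 := mul_le_mul_of_nonneg_left hA' h0
  have f2 := mul_le_mul_of_nonneg_left hB' h0
  nlinarith [f1, f2, hAB']

lemma aux_phi_abs {τ : ℝ} (h : |τ| ≤ 1/20) :
    (9/10)*τ^2 ≤ (1+τ)*Real.log (1+τ) + (1-τ)*Real.log (1-τ) := by
  rcases le_or_gt 0 τ with h0 | h0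
  · exact aux_phi h0 (le_trans (le_abs_self τ) h)
  · have h0' : 0 ≤ -τ := by linarith
    have hb : -τ ≤ 1/20 := le_trans (neg_le_abs τ) h
    have := aux_phi h0' hb
    rw [show (1:ℝ) + -τ = 1 - τ by ring, show (1:ℝ) - -τ = 1 + τ by ring, neg_pow] at this
    nlinarith [this]

lemma aux_entropy (c κ : ℝ) (hc : 1 ≤ c) (hκ : |κ| ≤ 1/20) :
    (9/10)*(κ^2/c) ≤ (c+κ)*Real.log (c+κ) + (c-κ)*Real.log (c-κ) - 2*c*Real.log c := by
  have hc0 : (0:ℝ) < c := lt_of_lt_of_le one_pos hc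
  set τ := κ/c with hτ
  have hτabs : |τ| ≤ 1/20 := by
    rw [hτ, abs_div, abs_of_pos hc0, div_le_iff₀ hc0]
    calc |κ| ≤ 1/20 := hκ
    _ ≤ 1/20 * c := by nlinarith
  have hphi := aux_phi_abs hτabs
  have hp : (0:ℝ) < 1 + τ := by have := abs_le.mp hτabs; linarith [this.1]
  have hq : (0:ℝ) < 1 - τ := by have := abs_le.mp hτabs; linarith [this.2]
  have hκτ : κ = c * τ := by rw [hτ]; field_simp
  have hck : c + κ = c*(1+τ) := by rw [hκτ]; ring
  have hck2 : c - κ = c*(1-τ) := by rw [hκτ]; ring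
  rw [hck, hck2, Real.log_mul hc0.ne' hp.ne', Real.log_mul hc0.ne' hq.ne']
  have key := mul_le_mul_of_nonneg_left hphi hc0.le
  have egoal : (9/10)*(κ^2/c) = c*((9/10)*τ^2) := by rw [hκτ]; field_simp
  nlinarith [key]

lemma layer_bound (n sw2 sb2 r x y xp k : ℝ)
    (hn : 2 ≤ n) (hsw0 : 0 < sw2) (hsw2 : sw2 < 2) (hsb : 0 < sb2)
    (hr : 0 < r) (hr2 : r^2*(2-sw2) = n*sb2)
    (hx : |x - r| ≤ r/16) (hy : |y - r| ≤ r/16) (hxp : |xp - r| ≤ r/16)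
    (hk : |k - n/2| ≤ 1/20) :
    n*((x^2+y^2)/(n*(sw2*xp^2/n+sb2)) - 1)
      - n*Real.log ((x^2+y^2)/(n*(sw2*xp^2/n+sb2)))
      + (1/40)*n*(Real.log y - Real.log x)^2 + (1/10)*((k-n/2)^2/n)
    ≤ (x^2+y^2)/(sw2*xp^2/n+sb2) + n*Real.log (sw2*xp^2/n+sb2)
      + (n-k)*(3*Real.log (n-k) - 2*Real.log x) + k*(3*Real.log k - 2*Real.log y)
      - ((r^2+r^2)/(sw2*r^2/n+sb2) + n*Real.log (sw2*r^2/n+sb2)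
        + (n-n/2)*(3*Real.log (n-n/2) - 2*Real.log r) + (n/2)*(3*Real.log (n/2) - 2*Real.log r)) := by
  have hn0 : (0:ℝ) < n := by linarith
  have hx0 : (0:ℝ) < x := by have := abs_le.mp hx; linarith [this.1]
  have hy0 : (0:ℝ) < y := by have := abs_le.mp hy; linarith [this.1]
  have hxb := abs_le.mp hx
  have hyb := abs_le.mp hy
  have hkb := abs_le.mp hk
  have hk0 : (0:ℝ) < k := by linarith
  have hnk0 : (0:ℝ) < n - k := by linarith
  obtain ⟨t, htdef⟩ : ∃ t', t' = sw2*xp^2/n+sb2 := ⟨_, rfl⟩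
  rw [← htdef]
  have ht : (0:ℝ) < t := by rw [htdef]; positivity
  obtain ⟨A, hAdef⟩ : ∃ A', A' = x^2+y^2 := ⟨_, rfl⟩
  rw [← hAdef]
  have hA : (0:ℝ) < A := by rw [hAdef]; positivity
  obtain ⟨ρ, hρdef⟩ : ∃ ρ', ρ' = A/(n*t) := ⟨_, rfl⟩
  rw [← hρdef]
  have hρ : (0:ℝ) < ρ := by rw [hρdef]; positivity
  obtain ⟨w, hwdef⟩ : ∃ w', w' = Real.log y - Real.log x := ⟨_, rfl⟩
  rw [← hwdef]
  obtain ⟨κ, hκdef⟩ : ∃ κ', κ' = k - n/2 := ⟨_, rfl⟩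
  rw [← hκdef]
  -- identity pieces
  have hAt : A/t = n*ρ := by rw [hρdef]; field_simp
  have hlogt : Real.log t = Real.log A - Real.log n - Real.log ρ := by
    rw [hρdef, Real.log_div hA.ne' (by positivity), Real.log_mul hn0.ne' ht.ne']; ring
  have hexpw : Real.exp w = y/x := by
    rw [hwdef, Real.exp_sub, Real.exp_log hx0, Real.exp_log hy0]
  have hexpnw : Real.exp (-w) = x/y := by
    rw [hwdef, neg_sub, Real.exp_sub, Real.exp_log hx0, Real.exp_log hy0]
  have hcosh : A = 2*x*y*Real.cosh w := by
    rw [Real.cosh_eq, hexpw, hexpnw, hAdef]; field_simp; ring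
  have hlogA : Real.log A = Real.log 2 + Real.log x + Real.log y + Real.log (Real.cosh w) := by
    rw [hcosh, Real.log_mul (by positivity) (Real.cosh_pos w).ne',
        Real.log_mul (by positivity) hy0.ne', Real.log_mul two_ne_zero hx0.ne']
  -- star denominator
  have htstar : sw2*r^2/n+sb2 = 2*r^2/n := by
    field_simp
    linear_combination -hr2
  have hlogtstar : Real.log (sw2*r^2/n+sb2) = Real.log 2 + 2*Real.log r - Real.log n := by
    rw [htstar, Real.log_div (by positivity) hn0.ne', Real.log_mul two_ne_zero (by positivity),
        Real.log_pow]
    push_cast; ring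
  have hrstar : (r^2+r^2)/(sw2*r^2/n+sb2) = n := by
    rw [htstar]; field_simp; ring
  have hnn2 : n - n/2 = n/2 := by ring
  -- the exact identity
  have hident : A/t + n*Real.log t
      + (n-k)*(3*Real.log (n-k) - 2*Real.log x) + k*(3*Real.log k - 2*Real.log y)
      - ((r^2+r^2)/(sw2*r^2/n+sb2) + n*Real.log (sw2*r^2/n+sb2)
        + (n-n/2)*(3*Real.log (n-n/2) - 2*Real.log r) + (n/2)*(3*Real.log (n/2) - 2*Real.log r))
      = n*(ρ-1) - n*Real.log ρ + n*Real.log (Real.cosh w) - 2*κ*w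
        + 3*((n-k)*Real.log (n-k) + k*Real.log k - n*Real.log (n/2)) := by
    rw [hrstar, hlogtstar, hnn2, hlogt, hlogA, hAt, hwdef, hκdef]
    ring
  -- inequality pieces
  have hwb : |w| ≤ 1/2 := by
    have hyx : y/x ≤ 17/15 := by rw [div_le_iff₀ hx0]; linarith [hyb.2, hxb.1]
    have hxy : x/y ≤ 17/15 := by rw [div_le_iff₀ hy0]; linarith [hxb.2, hyb.1]
    have l1 : Real.log (y/x) ≤ 2/15 := by
      have := Real.log_le_sub_one_of_pos (show (0:ℝ) < y/x by positivity)
      linarith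
    have l2 : Real.log (x/y) ≤ 2/15 := by
      have := Real.log_le_sub_one_of_pos (show (0:ℝ) < x/y by positivity)
      linarith
    rw [abs_le, hwdef]
    rw [Real.log_div hx0.ne' hy0.ne'] at l2
    rw [Real.log_div hy0.ne' hx0.ne'] at l1
    constructor
    · linarith only [l2]
    · linarith only [l1]
  have hκb : |κ| ≤ 1/20 := by rw [hκdef]; exact hk
  have hlc := aux_cosh hwb
  have hent := aux_entropy (n/2) κ (by linarith) hκb
  have hent' : (9/10)*(κ^2/(n/2)) ≤ (n-k)*Real.log (n-k) + k*Real.log k - n*Real.log (n/2) := by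
    have e1 : n/2 + κ = k := by rw [hκdef]; ring
    have e2 : n/2 - κ = n - k := by rw [hκdef]; ring
    rw [e1, e2] at hent
    linarith only [hent]
  have hent2 : (27/5)*(κ^2/n) ≤ 3*((n-k)*Real.log (n-k) + k*Real.log k - n*Real.log (n/2)) := by
    have e3 : (9/10)*(κ^2/(n/2)) = (9/5)*(κ^2/n) := by field_simp; ring
    rw [e3] at hent'
    linarith only [hent']
  have hlc' : (4/17)*n*w^2 ≤ n*Real.log (Real.cosh w) := by
    linarith only [mul_le_mul_of_nonneg_left hlc hn0.le]
  have hcross := aux_cross n w κ hn0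
  rw [hident]
  linarith only [hlc', hent2, hcross]

/-- For the rectified linear stochastic network on a ring of depth `L ≥ 3` and
width `N ≥ 2`, with `0 < σ_w² < 2` and `r* = √(N σ_b²/(2 − σ_w²))`, the uniform configuration
`r₊_l = r₋_l = r*`, `k_l = N/2` is a strict local minimum of the ring energy `ℒ`. -/
theorem relu_ring_uniform_strict_local_min
    (L : ℕ) (hL : 3 ≤ L) (N : ℕ) (hN : 2 ≤ N)
    (σw σb : ℝ) (hσw : 0 < σw ^ 2) (hσw2 : σw ^ 2 < 2) (hσb : 0 < σb)
    (rs : ℝ) (hrs : rs = Real.sqrt (N * σb ^ 2 / (2 - σw ^ 2)))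
    (ℒ : (Fin L → ℝ) × (Fin L → ℝ) × (Fin L → ℝ) → ℝ)
    (hℒ : ∀ p : (Fin L → ℝ) × (Fin L → ℝ) × (Fin L → ℝ),
      ℒ p = (1 / 2) * ∑ l : Fin L,
        ((p.1 l ^ 2 + p.2.1 l ^ 2) / (σw ^ 2 * p.1 (l - ⟨1, by omega⟩) ^ 2 / N + σb ^ 2) +
          N * Real.log (σw ^ 2 * p.1 l ^ 2 / N + σb ^ 2) +
          (N - p.2.2 l) * (3 * Real.log (N - p.2.2 l) - 2 * Real.log (p.1 l)) +
          p.2.2 l * (3 * Real.log (p.2.2 l) - 2 * Real.log (p.2.1 l)))) :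
    ∃ δ > 0, ∀ p : (Fin L → ℝ) × (Fin L → ℝ) × (Fin L → ℝ),
      dist p (fun _ => rs, fun _ => rs, fun _ => (N : ℝ) / 2) < δ →
      p ≠ (fun _ => rs, fun _ => rs, fun _ => (N : ℝ) / 2) →
      ℒ (fun _ => rs, fun _ => rs, fun _ => (N : ℝ) / 2) < ℒ p := by
  have hL0 : 0 < L := by omega
  haveI : NeZero L := ⟨by omega⟩
  have hn2 : (2:ℝ) ≤ (N:ℝ) := by exact_mod_cast hN
  have hn0 : (0:ℝ) < (N:ℝ) := by linarith
  have h2s : (0:ℝ) < 2 - σw^2 := by linarith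
  have harg : 0 < (N:ℝ) * σb^2/(2-σw^2) := by positivity
  have hr0 : 0 < rs := by rw [hrs]; exact Real.sqrt_pos.mpr harg
  have hr2' : rs^2 = (N:ℝ)*σb^2/(2-σw^2) := by rw [hrs]; exact Real.sq_sqrt harg.le
  have hr2 : rs^2*(2-σw^2) = (N:ℝ)*σb^2 := by rw [hr2']; field_simp
  have hsb2 : (0:ℝ) < σb^2 := by positivity
  refine ⟨min (rs/16) (1/20), by positivity, ?_⟩
  intro p hdist hne
  set c1 : Fin L := ⟨1, by omega⟩ with hc1
  -- coordinate bounds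
  have hdx : ∀ l, |p.1 l - rs| ≤ rs/16 := by
    intro l
    have h1 : dist p.1 (fun _ => rs : Fin L → ℝ) ≤
        dist p ((fun _ => rs, fun _ => rs, fun _ => (N:ℝ)/2) :
          (Fin L → ℝ) × (Fin L → ℝ) × (Fin L → ℝ)) := by
      rw [Prod.dist_eq]; exact le_max_left _ _
    have h2 := dist_le_pi_dist p.1 (fun _ => rs : Fin L → ℝ) l
    have h3 := lt_of_le_of_lt (h2.trans h1) hdist
    rw [Real.dist_eq] at h3
    exact le_of_lt (lt_of_lt_of_le h3 (min_le_left _ _))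
  have hdy : ∀ l, |p.2.1 l - rs| ≤ rs/16 := by
    intro l
    have h1 : dist p.2.1 (fun _ => rs : Fin L → ℝ) ≤
        dist p ((fun _ => rs, fun _ => rs, fun _ => (N:ℝ)/2) :
          (Fin L → ℝ) × (Fin L → ℝ) × (Fin L → ℝ)) := by
      rw [Prod.dist_eq, Prod.dist_eq]
      exact le_trans (le_max_left _ _) (le_max_right _ _)
    have h2 := dist_le_pi_dist p.2.1 (fun _ => rs : Fin L → ℝ) l
    have h3 := lt_of_le_of_lt (h2.trans h1) hdist
    rw [Real.dist_eq] at h3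
    exact le_of_lt (lt_of_lt_of_le h3 (min_le_left _ _))
  have hdk : ∀ l, |p.2.2 l - (N:ℝ)/2| ≤ 1/20 := by
    intro l
    have h1 : dist p.2.2 (fun _ => (N:ℝ)/2 : Fin L → ℝ) ≤
        dist p ((fun _ => rs, fun _ => rs, fun _ => (N:ℝ)/2) :
          (Fin L → ℝ) × (Fin L → ℝ) × (Fin L → ℝ)) := by
      rw [Prod.dist_eq, Prod.dist_eq]
      exact le_trans (le_max_right _ _) (le_max_right _ _)
    have h2 := dist_le_pi_dist p.2.2 (fun _ => (N:ℝ)/2 : Fin L → ℝ) l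
    have h3 := lt_of_le_of_lt (h2.trans h1) hdist
    rw [Real.dist_eq] at h3
    exact le_of_lt (lt_of_lt_of_le h3 (min_le_right _ _))
  have hXpos : ∀ l, 0 < p.1 l := by
    intro l; have := abs_le.mp (hdx l); linarith [this.1]
  have hYpos : ∀ l, 0 < p.2.1 l := by
    intro l; have := abs_le.mp (hdy l); linarith [this.1]
  -- abbreviations
  set Sstar : ℝ := (rs^2+rs^2)/(σw^2*rs^2/(N:ℝ)+σb^2) + (N:ℝ)*Real.log (σw^2*rs^2/(N:ℝ)+σb^2)
      + ((N:ℝ)-(N:ℝ)/2)*(3*Real.log ((N:ℝ)-(N:ℝ)/2) - 2*Real.log rs)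
      + ((N:ℝ)/2)*(3*Real.log ((N:ℝ)/2) - 2*Real.log rs) with hSdef
  have hstar : ℒ (fun _ => rs, fun _ => rs, fun _ => (N:ℝ)/2) = (1/2)*((L:ℝ)*Sstar) := by
    rw [hℒ]
    dsimp only
    rw [Finset.sum_const, Finset.card_univ, Fintype.card_fin, nsmul_eq_mul]
  rw [hℒ p, hstar]
  -- reindex the log-denominator term
  have hGsum : ∑ l : Fin L, (N:ℝ) * Real.log (σw ^ 2 * p.1 (l - c1) ^ 2 / N + σb ^ 2)
      = ∑ l : Fin L, (N:ℝ) * Real.log (σw ^ 2 * p.1 l ^ 2 / N + σb ^ 2) :=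
    Fintype.sum_equiv (Equiv.subRight c1) _ _ (fun _ => rfl)
  have hsplit : ∑ l : Fin L,
        ((p.1 l ^ 2 + p.2.1 l ^ 2) / (σw ^ 2 * p.1 (l - c1) ^ 2 / N + σb ^ 2) +
          N * Real.log (σw ^ 2 * p.1 l ^ 2 / N + σb ^ 2) +
          (N - p.2.2 l) * (3 * Real.log (N - p.2.2 l) - 2 * Real.log (p.1 l)) +
          p.2.2 l * (3 * Real.log (p.2.2 l) - 2 * Real.log (p.2.1 l)))
      = ∑ l : Fin L,
        ((p.1 l ^ 2 + p.2.1 l ^ 2) / (σw ^ 2 * p.1 (l - c1) ^ 2 / N + σb ^ 2) +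
          N * Real.log (σw ^ 2 * p.1 (l - c1) ^ 2 / N + σb ^ 2) +
          (N - p.2.2 l) * (3 * Real.log (N - p.2.2 l) - 2 * Real.log (p.1 l)) +
          p.2.2 l * (3 * Real.log (p.2.2 l) - 2 * Real.log (p.2.1 l))) := by
    simp only [Finset.sum_add_distrib]
    linear_combination (-1) * hGsum
  rw [hsplit]
  have hsub : ∑ l : Fin L,
        ((p.1 l ^ 2 + p.2.1 l ^ 2) / (σw ^ 2 * p.1 (l - c1) ^ 2 / N + σb ^ 2) +
          N * Real.log (σw ^ 2 * p.1 (l - c1) ^ 2 / N + σb ^ 2) +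
          (N - p.2.2 l) * (3 * Real.log (N - p.2.2 l) - 2 * Real.log (p.1 l)) +
          p.2.2 l * (3 * Real.log (p.2.2 l) - 2 * Real.log (p.2.1 l)) - Sstar)
      = (∑ l : Fin L,
        ((p.1 l ^ 2 + p.2.1 l ^ 2) / (σw ^ 2 * p.1 (l - c1) ^ 2 / N + σb ^ 2) +
          N * Real.log (σw ^ 2 * p.1 (l - c1) ^ 2 / N + σb ^ 2) +
          (N - p.2.2 l) * (3 * Real.log (N - p.2.2 l) - 2 * Real.log (p.1 l)) +
          p.2.2 l * (3 * Real.log (p.2.2 l) - 2 * Real.log (p.2.1 l)))) - (L:ℝ)*Sstar := by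
    rw [Finset.sum_sub_distrib, Finset.sum_const, Finset.card_univ, Fintype.card_fin,
      nsmul_eq_mul]
  -- per-layer lower bound
  have hlayer : ∀ l : Fin L,
      (N:ℝ)*((p.1 l^2 + p.2.1 l^2)/((N:ℝ)*(σw^2*(p.1 (l - c1))^2/(N:ℝ)+σb^2)) - 1)
        - (N:ℝ)*Real.log ((p.1 l^2 + p.2.1 l^2)/((N:ℝ)*(σw^2*(p.1 (l - c1))^2/(N:ℝ)+σb^2)))
        + (1/40)*(N:ℝ)*(Real.log (p.2.1 l) - Real.log (p.1 l))^2
        + (1/10)*((p.2.2 l-(N:ℝ)/2)^2/(N:ℝ))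
      ≤ (p.1 l ^ 2 + p.2.1 l ^ 2) / (σw ^ 2 * p.1 (l - c1) ^ 2 / N + σb ^ 2) +
          N * Real.log (σw ^ 2 * p.1 (l - c1) ^ 2 / N + σb ^ 2) +
          (N - p.2.2 l) * (3 * Real.log (N - p.2.2 l) - 2 * Real.log (p.1 l)) +
          p.2.2 l * (3 * Real.log (p.2.2 l) - 2 * Real.log (p.2.1 l)) - Sstar := by
    intro l
    exact layer_bound (N:ℝ) (σw^2) (σb^2) rs (p.1 l) (p.2.1 l) (p.1 (l - c1)) (p.2.2 l)
      hn2 hσw hσw2 hsb2 hr0 hr2 (hdx l) (hdy l) (hdx _) (hdk l)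
  have hρpos : ∀ l : Fin L,
      0 < (p.1 l^2 + p.2.1 l^2)/((N:ℝ)*(σw^2*(p.1 (l - c1))^2/(N:ℝ)+σb^2)) := by
    intro l
    have h1 := hXpos l
    have h2 := hYpos l
    positivity
  have hg0 : ∀ l : Fin L, 0 ≤
      (N:ℝ)*((p.1 l^2 + p.2.1 l^2)/((N:ℝ)*(σw^2*(p.1 (l - c1))^2/(N:ℝ)+σb^2)) - 1)
        - (N:ℝ)*Real.log ((p.1 l^2 + p.2.1 l^2)/((N:ℝ)*(σw^2*(p.1 (l - c1))^2/(N:ℝ)+σb^2)))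
        + (1/40)*(N:ℝ)*(Real.log (p.2.1 l) - Real.log (p.1 l))^2
        + (1/10)*((p.2.2 l-(N:ℝ)/2)^2/(N:ℝ)) := by
    intro l
    have h1 := Real.log_le_sub_one_of_pos (hρpos l)
    have h2 : 0 ≤ (1/40)*(N:ℝ)*(Real.log (p.2.1 l) - Real.log (p.1 l))^2 := by positivity
    have h3 : 0 ≤ (1/10)*((p.2.2 l-(N:ℝ)/2)^2/(N:ℝ)) := by positivity
    have h4 := mul_le_mul_of_nonneg_left h1 hn0.le
    linarith only [h2, h3, h4]
  -- existence of a strictly positive layer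
  have hwit : ∃ l : Fin L, 0 <
      (N:ℝ)*((p.1 l^2 + p.2.1 l^2)/((N:ℝ)*(σw^2*(p.1 (l - c1))^2/(N:ℝ)+σb^2)) - 1)
        - (N:ℝ)*Real.log ((p.1 l^2 + p.2.1 l^2)/((N:ℝ)*(σw^2*(p.1 (l - c1))^2/(N:ℝ)+σb^2)))
        + (1/40)*(N:ℝ)*(Real.log (p.2.1 l) - Real.log (p.1 l))^2
        + (1/10)*((p.2.2 l-(N:ℝ)/2)^2/(N:ℝ)) := by
    by_cases hK : ∀ l, p.2.2 l = (N:ℝ)/2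
    · by_cases hY : ∀ l, p.2.1 l = p.1 l
      · have hXne : ∃ l, p.1 l ≠ rs := by
          by_contra hcon
          push_neg at hcon
          apply hne
          have h1 : p.1 = (fun _ => rs) := funext hcon
          have h2 : p.2.1 = (fun _ => rs) := funext (fun l => by rw [hY l, hcon l])
          have h3 : p.2.2 = (fun _ => (N:ℝ)/2) := funext hK
          calc p = (p.1, p.2.1, p.2.2) := rfl
            _ = _ := by rw [h1, h2, h3]
        obtain ⟨lx, hlx⟩ := hXne
        have hgne : 0 < |p.1 lx ^2 - rs^2| := by
          rw [abs_pos]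
          intro hq
          apply hlx
          have h5 : (p.1 lx - rs)*(p.1 lx + rs) = 0 := by linear_combination hq
          rcases mul_eq_zero.mp h5 with h6 | h6
          · linarith
          · exfalso; have := hXpos lx; linarith
        have hex : ∃ l, (p.1 l^2 + p.2.1 l^2)/((N:ℝ)*(σw^2*(p.1 (l - c1))^2/(N:ℝ)+σb^2)) ≠ 1 := by
          by_contra hcon
          push_neg at hcon
          have hrec : ∀ l, 2*((p.1 l)^2 - rs^2) = σw^2*((p.1 (l - c1))^2 - rs^2) := by
            intro l
            have h1 := hcon l
            have hd : (0:ℝ) < (N:ℝ)*(σw^2*(p.1 (l - c1))^2/(N:ℝ)+σb^2) := by positivity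
            rw [div_eq_one_iff_eq hd.ne'] at h1
            rw [hY l] at h1
            have h1' : p.1 l^2 + p.1 l^2 = σw^2*(p.1 (l - c1))^2 + (N:ℝ)*σb^2 := by
              field_simp at h1
              linarith only [h1]
            linear_combination h1' - hr2
          obtain ⟨l0, -, hmax⟩ :=
            Finset.univ.exists_max_image (fun l => |(p.1 l)^2 - rs^2|) ⟨lx, Finset.mem_univ _⟩
          have hm0 : 0 < |(p.1 l0)^2 - rs^2| := lt_of_lt_of_le hgne (hmax lx (Finset.mem_univ _))
          have h7 := hrec l0
          have h8 : |2*((p.1 l0)^2 - rs^2)| = 2*|(p.1 l0)^2 - rs^2| := by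
            rw [abs_mul]; norm_num
          have h9 : |σw^2*((p.1 (l0 - c1))^2 - rs^2)| = σw^2*|(p.1 (l0 - c1))^2 - rs^2| := by
            rw [abs_mul, abs_of_pos hσw]
          have h10 : 2*|(p.1 l0)^2 - rs^2| = σw^2*|(p.1 (l0 - c1))^2 - rs^2| := by
            rw [← h8, h7, h9]
          have h11 := hmax (l0 - c1) (Finset.mem_univ _)
          nlinarith [h10, h11, hm0, hσw2, hσw]
        obtain ⟨l1, hρne⟩ := hex
        refine ⟨l1, ?_⟩
        have h1 := Real.log_lt_sub_one_of_pos (hρpos l1) hρne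
        have h2 : 0 ≤ (1/40)*(N:ℝ)*(Real.log (p.2.1 l1) - Real.log (p.1 l1))^2 := by positivity
        have h3 : 0 ≤ (1/10)*((p.2.2 l1-(N:ℝ)/2)^2/(N:ℝ)) := by positivity
        have h4 := mul_lt_mul_of_pos_left h1 hn0
        linarith only [h2, h3, h4]
      · push_neg at hY
        obtain ⟨l1, hl1⟩ := hY
        refine ⟨l1, ?_⟩
        have hwne : Real.log (p.2.1 l1) - Real.log (p.1 l1) ≠ 0 := by
          intro h
          apply hl1
          have h5 : Real.log (p.2.1 l1) = Real.log (p.1 l1) := by linarith only [h]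
          rw [← Real.exp_log (hYpos l1), h5, Real.exp_log (hXpos l1)]
        have h1 := Real.log_le_sub_one_of_pos (hρpos l1)
        have h4 := mul_le_mul_of_nonneg_left h1 hn0.le
        have h2 : 0 < (1/40)*(N:ℝ)*(Real.log (p.2.1 l1) - Real.log (p.1 l1))^2 := by positivity
        have h3 : 0 ≤ (1/10)*((p.2.2 l1-(N:ℝ)/2)^2/(N:ℝ)) := by positivity
        linarith only [h2, h3, h4]
    · push_neg at hK
      obtain ⟨l1, hl1⟩ := hK
      refine ⟨l1, ?_⟩
      have hκne : p.2.2 l1 - (N:ℝ)/2 ≠ 0 := sub_ne_zero.mpr hl1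
      have h1 := Real.log_le_sub_one_of_pos (hρpos l1)
      have h4 := mul_le_mul_of_nonneg_left h1 hn0.le
      have h2 : 0 ≤ (1/40)*(N:ℝ)*(Real.log (p.2.1 l1) - Real.log (p.1 l1))^2 := by positivity
      have h3 : 0 < (1/10)*((p.2.2 l1-(N:ℝ)/2)^2/(N:ℝ)) := by positivity
      linarith only [h2, h3, h4]
  obtain ⟨l0, hl0⟩ := hwit
  have hsum1 : 0 < ∑ l : Fin L,
      ((N:ℝ)*((p.1 l^2 + p.2.1 l^2)/((N:ℝ)*(σw^2*(p.1 (l - c1))^2/(N:ℝ)+σb^2)) - 1)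
        - (N:ℝ)*Real.log ((p.1 l^2 + p.2.1 l^2)/((N:ℝ)*(σw^2*(p.1 (l - c1))^2/(N:ℝ)+σb^2)))
        + (1/40)*(N:ℝ)*(Real.log (p.2.1 l) - Real.log (p.1 l))^2
        + (1/10)*((p.2.2 l-(N:ℝ)/2)^2/(N:ℝ))) :=
    Finset.sum_pos' (fun l _ => hg0 l) ⟨l0, Finset.mem_univ _, hl0⟩
  have hsum2 := Finset.sum_le_sum (fun l (_ : l ∈ Finset.univ) => hlayer l)
  have hfin : (L:ℝ)*Sstar < ∑ l : Fin L,
        ((p.1 l ^ 2 + p.2.1 l ^ 2) / (σw ^ 2 * p.1 (l - c1) ^ 2 / N + σb ^ 2) +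
          N * Real.log (σw ^ 2 * p.1 (l - c1) ^ 2 / N + σb ^ 2) +
          (N - p.2.2 l) * (3 * Real.log (N - p.2.2 l) - 2 * Real.log (p.1 l)) +
          p.2.2 l * (3 * Real.log (p.2.2 l) - 2 * Real.log (p.2.1 l))) := by
    have := lt_of_lt_of_le hsum1 hsum2
    linarith only [this, hsub.ge, hsub.le]
  linarith only [hfin]
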